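/- Let Γ act minimally by homeomorphisms on a compact metric space X and let c be a continuous cocycle. Suppose the action preserves a Borel probability measure μ and is μ-ergodic, and suppose φ ∈ L^∞(μ) satisfies c(f, x) = φ(f·x) − φ(x) for every f ∈ Γ and μ-almost every x. Then there exists a continuous function φ̃ : X → ℝ, equal to φ μ-almost everywhere, such that c(f, x) = φ̃(f·x) − φ̃(x) holds for all f ∈ Γ and all x ∈ X. -/

import Mathlib

open MeasureTheory

private lemma stmt4_countable_of_fg {Γ : Type*} [Group Γ] [Group.FG Γ] : Countable Γ := by
  obtain ⟨S, hScl, hSfin⟩ := Group.fg_iff.mp ‹Group.FG Γ›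
  haveI : Countable S := hSfin.countable.to_subtype
  haveI : Countable (FreeGroup S) := by unfold FreeGroup; infer_instance
  have hsurj : Function.Surjective (FreeGroup.lift ((↑) : S → Γ)) := by
    rw [← MonoidHom.range_eq_top, FreeGroup.range_lift_eq_closure, Subtype.range_coe, hScl]
  exact hsurj.countable

theorem stmt4 {Γ X : Type*} [Group Γ] [Group.FG Γ] [MetricSpace X] [CompactSpace X]
    [MeasurableSpace X] [BorelSpace X]
    [MulAction Γ X] [ContinuousConstSMul Γ X]
    (hmin : ∀ x : X, Dense (MulAction.orbit Γ x))
    (c : Γ → X → ℝ) (hc : ∀ f : Γ, Continuous (c f))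
    (hcoc : ∀ f g : Γ, ∀ x : X, c (f * g) x = c g x + c f (g • x))
    (μ : Measure X) [IsProbabilityMeasure μ]
    (hinv : ∀ g : Γ, MeasurePreserving (fun x : X => g • x) μ μ)
    (herg : ∀ s : Set X, MeasurableSet s →
      (∀ g : Γ, (fun x : X => g • x) ⁻¹' s = s) → μ s = 0 ∨ μ s = 1)
    (φ : X → ℝ) (hφm : Measurable φ)
    (K : ℝ) (hK : ∀ᵐ x ∂μ, |φ x| ≤ K)
    (hrel : ∀ f : Γ, ∀ᵐ x ∂μ, c f x = φ (f • x) - φ x) :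
    ∃ φt : X → ℝ, Continuous φt ∧ (∀ᵐ x ∂μ, φt x = φ x) ∧
      ∀ f : Γ, ∀ x : X, c f x = φt (f • x) - φt x := by
  haveI : Countable Γ := stmt4_countable_of_fg
  classical
  -- basic cocycle identities
  have hc1 : ∀ x : X, c 1 x = 0 := by
    intro x
    have h := hcoc 1 1 x
    rw [one_mul, one_smul] at h
    linarith
  have hcinv : ∀ (g : Γ) (x : X), c g⁻¹ (g • x) = - c g x := by
    intro g x
    have h := hcoc g⁻¹ g x
    rw [inv_mul_cancel, hc1] at h
    linarith
  -- the skew product setup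
  set F : X → X × ℝ := fun x => (x, φ x) with hF
  have hFm : Measurable F := measurable_id.prodMk hφm
  set ν : Measure (X × ℝ) := Measure.map F μ with hν
  haveI : IsProbabilityMeasure ν := Measure.isProbabilityMeasure_map hFm.aemeasurable
  set T : Γ → X × ℝ → X × ℝ := fun g p => (g • p.1, p.2 + c g p.1) with hT
  have hTc : ∀ g, Continuous (T g) :=
    fun g => (continuous_fst.const_smul g).prodMk
      (continuous_snd.add ((hc g).comp continuous_fst))
  have hTmap : ∀ g, Measure.map (T g) ν = ν := by
    intro g
    rw [hν, Measure.map_map (hTc g).measurable hFm]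
    have hae : (T g ∘ F) =ᵐ[μ] (F ∘ fun x => g • x) := by
      filter_upwards [hrel g] with x hx
      show (g • x, φ x + c g x) = (g • x, φ (g • x))
      rw [hx]; ring_nf
    rw [Measure.map_congr hae,
      ← Measure.map_map hFm (hinv g).measurable, (hinv g).map_eq]
  -- the support of ν
  set S : Set (X × ℝ) := {p | ∀ U : Set (X × ℝ), IsOpen U → p ∈ U → 0 < ν U} with hS
  have hScl : IsClosed S := by
    rw [← isOpen_compl_iff, isOpen_iff_forall_mem_open]
    intro p hp
    simp only [hS, Set.mem_compl_iff, Set.mem_setOf_eq, not_forall] at hp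
    obtain ⟨U, hU, hpU, hU0⟩ := hp
    refine ⟨U, fun q hq hqS => ?_, hU, hpU⟩
    exact hU0 (hqS U hU hq)
  have hSsub : ∀ C : Set (X × ℝ), IsClosed C → ν Cᶜ = 0 → S ⊆ C := by
    intro C hCcl hC0 p hp
    by_contra hpC
    have := hp Cᶜ hCcl.isOpen_compl hpC
    rw [hC0] at this
    exact lt_irrefl 0 this
  have hSnull : ν Sᶜ = 0 := by
    obtain ⟨B, hBc, -, hBb⟩ := TopologicalSpace.exists_countable_basis (X × ℝ)
    have hsub : Sᶜ ⊆ ⋃₀ {b ∈ B | ν b = 0} := by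
      intro p hp
      simp only [hS, Set.mem_compl_iff, Set.mem_setOf_eq, not_forall] at hp
      obtain ⟨U, hU, hpU, hU0⟩ := hp
      have hU0' : ν U = 0 := le_antisymm (not_lt.mp hU0) zero_le
      obtain ⟨v, hvB, hpv, hvU⟩ := hBb.exists_subset_of_mem_open hpU hU
      exact ⟨v, ⟨hvB, le_antisymm (le_trans (measure_mono hvU) hU0'.le) zero_le⟩, hpv⟩
    refine measure_mono_null hsub ?_
    rw [measure_sUnion_null_iff (hBc.mono (Set.sep_subset _ _))]
    exact fun s hs => hs.2
  -- invariance of the support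
  have hTS : ∀ (g : Γ), ∀ p ∈ S, T g p ∈ S := by
    intro g p hp U hU hpU
    have h1 : ν (T g ⁻¹' U) = ν U := by
      conv_rhs => rw [← hTmap g]
      rw [Measure.map_apply (hTc g).measurable hU.measurableSet]
    rw [← h1]
    exact hp _ (hU.preimage (hTc g)) hpU
  have hmemS : ∀ (g : Γ) (x : X) (t : ℝ), (g • x, t) ∈ S ↔ (x, t - c g x) ∈ S := by
    intro g x t
    constructor
    · intro h
      have h2 := hTS g⁻¹ _ h
      simpa [hT, inv_smul_smul, hcinv g x, sub_eq_add_neg] using h2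
    · intro h
      have h2 := hTS g _ h
      simpa [hT] using h2
  -- S is contained in a compact box
  have hbox : S ⊆ Set.univ ×ˢ Set.Icc (-K) K := by
    refine hSsub _ (isClosed_univ.prod isClosed_Icc) ?_
    rw [hν, Measure.map_apply hFm (isClosed_univ.prod isClosed_Icc).measurableSet.compl]
    have : F ⁻¹' (Set.univ ×ˢ Set.Icc (-K) K)ᶜ ⊆ {x | ¬ |φ x| ≤ K} := by
      intro x hx
      simp only [hF, Set.mem_preimage, Set.mem_compl_iff, Set.prodMk_mem_set_prod_eq,
        Set.mem_univ, true_and, Set.mem_Icc] at hx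
      simpa [abs_le] using hx
    refine measure_mono_null this ?_
    simpa [ae_iff] using hK
  have hScpt : IsCompact S :=
    (isCompact_univ.prod isCompact_Icc).of_isClosed_subset hScl hbox
  have hSne : S.Nonempty := by
    rw [Set.nonempty_iff_ne_empty]
    intro h
    have : ν Sᶜ = 1 := by rw [h, Set.compl_empty, measure_univ]
    rw [hSnull] at this
    exact zero_ne_one this
  -- projection of S is everything
  have hPuniv : ∀ x : X, x ∈ Prod.fst '' S := by
    have hPcl : IsClosed (Prod.fst '' S) := (hScpt.image continuous_fst).isClosed
    have hPinv : ∀ (g : Γ) (x : X), x ∈ Prod.fst '' S → g • x ∈ Prod.fst '' S := by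
      rintro g x ⟨p, hp, rfl⟩
      exact ⟨T g p, hTS g p hp, rfl⟩
    obtain ⟨p, hp⟩ := hSne
    have horb : MulAction.orbit Γ p.1 ⊆ Prod.fst '' S := by
      rintro y ⟨g, rfl⟩
      exact hPinv g p.1 ⟨p, hp, rfl⟩
    have : Set.univ ⊆ Prod.fst '' S := by
      rw [← (hmin p.1).closure_eq]
      calc closure (MulAction.orbit Γ p.1) ⊆ closure (Prod.fst '' S) := closure_mono horb
        _ = Prod.fst '' S := hPcl.closure_eq
    exact fun x => this (Set.mem_univ x)
  -- fibers
  set fib : X → Set ℝ := fun x => {t | (x, t) ∈ S} with hfib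
  have hfibcl : ∀ x, IsClosed (fib x) :=
    fun x => hScl.preimage (Continuous.prodMk_right x)
  have hfibsub : ∀ x, fib x ⊆ Set.Icc (-K) K := fun x t ht => (hbox ht).2
  have hfibne : ∀ x, (fib x).Nonempty := by
    intro x
    obtain ⟨p, hpS, hpx⟩ := hPuniv x
    exact ⟨p.2, by rwa [hfib, Set.mem_setOf_eq, show (x, p.2) = p from Prod.ext hpx.symm rfl]⟩
  have hfibbddA : ∀ x, BddAbove (fib x) := fun x => ⟨K, fun t ht => (hfibsub x ht).2⟩
  have hfibbddB : ∀ x, BddBelow (fib x) := fun x => ⟨-K, fun t ht => (hfibsub x ht).1⟩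
  set M : X → ℝ := fun x => sSup (fib x) with hM
  set m : X → ℝ := fun x => sInf (fib x) with hm
  have hMmem : ∀ x, M x ∈ fib x := fun x => (hfibcl x).csSup_mem (hfibne x) (hfibbddA x)
  have hmmem : ∀ x, m x ∈ fib x := fun x => (hfibcl x).csInf_mem (hfibne x) (hfibbddB x)
  have hfib_eq : ∀ (g : Γ) (x : X), fib (g • x) = (fun t => t + c g x) '' fib x := by
    intro g x
    ext t
    rw [hfib]
    simp only [Set.mem_setOf_eq, Set.mem_image, hmemS g x t]
    constructor
    · intro h; exact ⟨t - c g x, h, by ring⟩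
    · rintro ⟨u, hu, rfl⟩; simpa using hu
  have hM_eq : ∀ (g : Γ) (x : X), M (g • x) = M x + c g x := by
    intro g x
    rw [hM]
    simp only
    rw [hfib_eq g x]
    exact (Monotone.map_csSup_of_continuousAt (continuousAt_id.add continuousAt_const)
      (fun a b h => add_le_add_left h _) (hfibne x) (hfibbddA x)).symm
  have hm_eq : ∀ (g : Γ) (x : X), m (g • x) = m x + c g x := by
    intro g x
    rw [hm]
    simp only
    rw [hfib_eq g x]
    exact (Monotone.map_csInf_of_continuousAt (continuousAt_id.add continuousAt_const)
      (fun a b h => add_le_add_left h _) (hfibne x) (hfibbddB x)).symm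
  -- semicontinuity
  have hMusc : UpperSemicontinuous M := by
    rw [upperSemicontinuous_iff_isClosed_preimage]
    intro r
    have heq : M ⁻¹' Set.Ici r = Prod.fst '' (S ∩ Set.univ ×ˢ Set.Ici r) := by
      ext x
      constructor
      · intro hx
        exact ⟨(x, M x), ⟨hMmem x, Set.mk_mem_prod (Set.mem_univ _) hx⟩, rfl⟩
      · rintro ⟨p, ⟨hpS, hpr⟩, rfl⟩
        have : p.2 ∈ fib p.1 := by rwa [hfib, Set.mem_setOf_eq]
        exact le_trans hpr.2 (le_csSup (hfibbddA p.1) this)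
    rw [heq]
    exact ((hScpt.inter_right (isClosed_univ.prod isClosed_Ici)).image continuous_fst).isClosed
  have hmlsc : LowerSemicontinuous m := by
    rw [lowerSemicontinuous_iff_isClosed_preimage]
    intro r
    have heq : m ⁻¹' Set.Iic r = Prod.fst '' (S ∩ Set.univ ×ˢ Set.Iic r) := by
      ext x
      constructor
      · intro hx
        exact ⟨(x, m x), ⟨hmmem x, Set.mk_mem_prod (Set.mem_univ _) hx⟩, rfl⟩
      · rintro ⟨p, ⟨hpS, hpr⟩, rfl⟩
        have : p.2 ∈ fib p.1 := by rwa [hfib, Set.mem_setOf_eq]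
        exact le_trans (csInf_le (hfibbddB p.1) this) hpr.2
    rw [heq]
    exact ((hScpt.inter_right (isClosed_univ.prod isClosed_Iic)).image continuous_fst).isClosed
  -- d = M - m is invariant and upper semicontinuous, hence constant by minimality
  have hdusc : UpperSemicontinuous (fun x => M x - m x) := by
    have h1 : UpperSemicontinuous (fun x => - m x) :=
      continuous_neg.comp_lowerSemicontinuous_antitone hmlsc (fun a b h => neg_le_neg h)
    simpa [sub_eq_add_neg] using hMusc.add h1
  have hconst : ∀ (h : X → ℝ), (∀ r : ℝ, IsClosed {x | r ≤ h x}) →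
      (∀ (g : Γ) (x : X), h (g • x) = h x) → ∀ x y : X, h x = h y := by
    intro h hcl hinvh x y
    have key : ∀ x y : X, h x ≤ h y := by
      intro x y
      have horb : MulAction.orbit Γ x ⊆ {z | h x ≤ h z} := by
        rintro z ⟨g, rfl⟩
        rw [Set.mem_setOf_eq, hinvh g x]
      have huniv : Set.univ ⊆ {z | h x ≤ h z} := by
        rw [← (hmin x).closure_eq]
        calc closure (MulAction.orbit Γ x) ⊆ closure {z | h x ≤ h z} := closure_mono horb
          _ = {z | h x ≤ h z} := (hcl (h x)).closure_eq
      exact huniv (Set.mem_univ y)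
    exact le_antisymm (key x y) (key y x)
  obtain ⟨p0, hp0⟩ := hSne
  have hdconst : ∀ x : X, M x - m x = M p0.1 - m p0.1 := by
    intro x
    refine hconst (fun x => M x - m x) ?_ ?_ x p0.1
    · intro r
      have := hdusc.isClosed_preimage r
      simpa [Set.preimage, Set.mem_Ici] using this
    · intro g x
      show M (g • x) - m (g • x) = M x - m x
      rw [hM_eq g x, hm_eq g x]; ring
  -- M is continuous
  have hMlsc : LowerSemicontinuous M := by
    have : M = fun x => m x + (M p0.1 - m p0.1) := by
      funext x
      have := hdconst x
      linarith
    rw [this]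
    exact hmlsc.add lowerSemicontinuous_const
  have hMcont : Continuous M := continuous_iff_lower_upperSemicontinuous.mpr ⟨hMlsc, hMusc⟩
  -- a.e. the graph of φ lies in S
  have hgr : ∀ᵐ x ∂μ, (x, φ x) ∈ S := by
    have h0 : μ (F ⁻¹' Sᶜ) = 0 := by
      rw [← Measure.map_apply hFm hScl.measurableSet.compl, ← hν]
      exact hSnull
    rw [ae_iff]
    exact h0
  -- ψ = M - φ is a.e. invariant, measurable, a.e. bounded
  set ψ : X → ℝ := fun x => M x - φ x with hψ
  have hψm : Measurable ψ := hMcont.measurable.sub hφm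
  have hψinv : ∀ g : Γ, ∀ᵐ x ∂μ, ψ (g • x) = ψ x := by
    intro g
    filter_upwards [hrel g] with x hx
    rw [hψ]
    simp only
    rw [hM_eq g x]
    linarith
  have hMbd : ∀ x, |M x| ≤ K := by
    intro x
    have := hfibsub x (hMmem x)
    rw [abs_le]
    exact ⟨this.1, this.2⟩
  have hψbd : ∀ᵐ x ∂μ, |ψ x| ≤ 2 * K := by
    filter_upwards [hK] with x hx
    rw [hψ]
    simp only
    have := hMbd x
    rw [abs_le] at *
    constructor <;> linarith
  -- ergodicity: ψ is a.e. constant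
  set A : ℚ → Set X := fun q => {x | ψ x ≤ (q : ℝ)} with hA
  have hAm : ∀ q, MeasurableSet (A q) := fun q => hψm measurableSet_Iic
  have hA01 : ∀ q, μ (A q) = 0 ∨ μ (A q) = 1 := by
    intro q
    set B : Set X := ⋂ g : Γ, (fun x => g • x) ⁻¹' A q with hB
    have hsmulm : ∀ g : Γ, Measurable (fun x : X => g • x) :=
      fun g => (continuous_const_smul g).measurable
    have hBm : MeasurableSet B := MeasurableSet.iInter fun g => (hAm q).preimage (hsmulm g)
    have hBinv : ∀ g0 : Γ, (fun x : X => g0 • x) ⁻¹' B = B := by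
      intro g0
      ext x
      simp only [hB, Set.mem_preimage, Set.mem_iInter]
      constructor
      · intro h g
        have := h (g * g0⁻¹)
        rwa [mul_smul, inv_smul_smul] at this
      · intro h g
        have := h (g * g0)
        rwa [mul_smul] at this
    have hBA : B ⊆ A q := by
      intro x hx
      have := Set.mem_iInter.mp hx 1
      rwa [Set.mem_preimage, one_smul] at this
    have hdiffnull : μ (A q \ B) = 0 := by
      have hsub : A q \ B ⊆ ⋃ g : Γ, (A q \ (fun x => g • x) ⁻¹' A q) := by
        intro x hx
        obtain ⟨hxA, hxB⟩ := hx
        simp only [hB, Set.mem_iInter, not_forall] at hxB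
        obtain ⟨g, hg⟩ := hxB
        exact Set.mem_iUnion.mpr ⟨g, hxA, hg⟩
      refine measure_mono_null hsub (measure_iUnion_null fun g => ?_)
      have : A q \ (fun x => g • x) ⁻¹' A q ⊆ {x | ¬ ψ (g • x) = ψ x} := by
        intro x hx
        obtain ⟨hxA, hxP⟩ := hx
        simp only [hA, Set.mem_setOf_eq, Set.mem_preimage] at hxA hxP
        intro heq
        apply hxP
        rw [heq]
        exact hxA
      refine measure_mono_null this ?_
      have := hψinv g
      rwa [ae_iff] at this
    have hμAB : μ (A q) = μ B := by
      refine le_antisymm ?_ (measure_mono hBA)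
      calc μ (A q) ≤ μ (B ∪ A q \ B) := measure_mono fun x hx => by
            by_cases h : x ∈ B
            · exact Or.inl h
            · exact Or.inr ⟨hx, h⟩
        _ ≤ μ B + μ (A q \ B) := measure_union_le _ _
        _ = μ B := by rw [hdiffnull, add_zero]
    rw [hμAB]
    exact herg B hBm hBinv
  -- locate the essential value of ψ
  have hTne : ∃ q : ℚ, μ (A q) = 1 := by
    obtain ⟨q, hq⟩ := exists_rat_gt (2 * K)
    refine ⟨q, ?_⟩
    rw [← prob_compl_eq_zero_iff (hAm q)]
    have hsub : (A q)ᶜ ⊆ {x | ¬ |ψ x| ≤ 2 * K} := by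
      intro x hx
      simp only [hA, Set.mem_compl_iff, Set.mem_setOf_eq, not_le] at hx ⊢
      calc 2 * K < q := hq
        _ < ψ x := hx
        _ ≤ |ψ x| := le_abs_self _
    refine measure_mono_null hsub ?_
    have := hψbd
    rwa [ae_iff] at this
  have hTlb : ∀ q : ℚ, μ (A q) = 1 → -(2 * K) - 1 ≤ (q : ℝ) := by
    intro q hq
    by_contra hlt
    push_neg at hlt
    have h0 : μ (A q) = 0 := by
      have hsub : A q ⊆ {x | ¬ |ψ x| ≤ 2 * K} := by
        intro x hx
        simp only [hA, Set.mem_setOf_eq] at hx ⊢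
        intro habs
        rw [abs_le] at habs
        linarith
      refine measure_mono_null hsub ?_
      have := hψbd
      rwa [ae_iff] at this
    rw [h0] at hq
    exact zero_ne_one hq
  set Tset : Set ℝ := (fun q : ℚ => (q : ℝ)) '' {q : ℚ | μ (A q) = 1} with hTset
  have hTsetne : Tset.Nonempty := by
    obtain ⟨q, hq⟩ := hTne
    exact ⟨q, q, hq, rfl⟩
  have hTsetbdd : BddBelow Tset := by
    refine ⟨-(2 * K) - 1, ?_⟩
    rintro r ⟨q, hq, rfl⟩
    exact hTlb q hq
  set a : ℝ := sInf Tset with ha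
  have hae1 : ∀ᵐ x ∂μ, ψ x ≤ a := by
    rw [ae_iff]
    have hsub : {x | ¬ ψ x ≤ a} ⊆ ⋃ q : {q : ℚ // μ (A q) = 1}, (A q.1)ᶜ := by
      intro x hx
      rw [Set.mem_setOf_eq, not_le] at hx
      obtain ⟨r, hrT, hr⟩ := exists_lt_of_csInf_lt hTsetne hx
      obtain ⟨q, hq, rfl⟩ := hrT
      refine Set.mem_iUnion.mpr ⟨⟨q, hq⟩, ?_⟩
      simp only [hA, Set.mem_compl_iff, Set.mem_setOf_eq, not_le]
      exact hr
    refine measure_mono_null hsub (measure_iUnion_null fun q => ?_)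
    rw [prob_compl_eq_zero_iff (hAm q.1)]
    exact q.2
  have hae2 : ∀ᵐ x ∂μ, a ≤ ψ x := by
    rw [ae_iff]
    have hsub : {x | ¬ a ≤ ψ x} ⊆ ⋃ q : {q : ℚ // (q : ℝ) < a}, A q.1 := by
      intro x hx
      rw [Set.mem_setOf_eq, not_le] at hx
      obtain ⟨q, hq1, hq2⟩ := exists_rat_btwn hx
      exact Set.mem_iUnion.mpr ⟨⟨q, hq2⟩, hq1.le⟩
    refine measure_mono_null hsub (measure_iUnion_null fun q => ?_)
    rcases hA01 q.1 with h | h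
    · exact h
    · exfalso
      have : a ≤ (q.1 : ℝ) := csInf_le hTsetbdd ⟨q.1, h, rfl⟩
      exact absurd q.2 (not_lt.mpr this)
  -- conclusion
  refine ⟨fun x => M x - a, hMcont.sub continuous_const, ?_, ?_⟩
  · filter_upwards [hae1, hae2, hgr] with x h1 h2 _
    have : ψ x = a := le_antisymm h1 h2
    rw [hψ] at this
    show M x - a = φ x
    simp only at this
    linarith
  · intro f x
    show c f x = (M (f • x) - a) - (M x - a)
    rw [hM_eq f x]
    ring
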